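/- Let D ≥ 1 be an integer, let ξ : ℝ_+^D → ℝ be continuous, convex and ℝ_+^D-increasing, let χ : ℝ_+^D → ℝ be Lipschitz, convex and ℝ_+^D-increasing, and let t ≥ 0. Then for every x ∈ ℝ_+^D, sup_{y ∈ ℝ_+^D} { χ(y) − (tξ)*(y−x) } = sup_{p ∈ ℝ_+^D} { p·x + tξ(p) − χ*(p) }, where χ*(p) = sup_{z ∈ ℝ_+^D} (z·p − χ(z)) and (tξ)*(y) = sup_{z ∈ ℝ_+^D} (z·y − tξ(z)). -/

import Mathlib

open MeasureTheory
open scoped NNReal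

/-- The nonnegative orthant `ℝ_+^D` in `ℝ^D`. -/
def orthant (D : ℕ) : Set (EuclideanSpace ℝ (Fin D)) := {x | ∀ i, 0 ≤ x i}

/-- The monotone conjugate `(tg)*(y) = sup_{z ∈ ℝ_+^D} (z·y − t·g(z))`, valued in
`ℝ ∪ {+∞}` (formalized as `EReal`). -/
noncomputable def tConj (D : ℕ) (t : ℝ) (g : EuclideanSpace ℝ (Fin D) → ℝ)
    (y : EuclideanSpace ℝ (Fin D)) : EReal :=
  ⨆ z : orthant D, (((inner ℝ z.1 y : ℝ) - t * g z.1 : ℝ) : EReal)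

section Helpers

variable {D : ℕ}

lemma orthant_zero : (0 : EuclideanSpace ℝ (Fin D)) ∈ orthant D := fun i => le_refl 0

lemma orthant_add {a b : EuclideanSpace ℝ (Fin D)} (ha : a ∈ orthant D) (hb : b ∈ orthant D) :
    a + b ∈ orthant D := fun i => by
  have := ha i; have := hb i
  simp only [PiLp.add_apply]; linarith

lemma orthant_closed : IsClosed (orthant D) := by
  have : orthant D = ⋂ i, {x : EuclideanSpace ℝ (Fin D) | 0 ≤ x i} := by
    ext x; simp [orthant]
  rw [this]
  exact isClosed_iInter fun i =>
    isClosed_le continuous_const (EuclideanSpace.proj i).continuous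

lemma inner_sum' (a b : EuclideanSpace ℝ (Fin D)) :
    (inner ℝ a b : ℝ) = ∑ i, a i * b i := by
  simp [PiLp.inner_apply, RCLike.inner_apply, conj_trivial]
  exact Finset.sum_congr rfl fun i _ => mul_comm _ _

instance : Nonempty (orthant D) := ⟨⟨0, orthant_zero⟩⟩

lemma tConj_ne_bot (t : ℝ) (g : EuclideanSpace ℝ (Fin D) → ℝ)
    (w : EuclideanSpace ℝ (Fin D)) : tConj D t g w ≠ ⊥ := by
  intro h
  have hle : (((inner ℝ (0 : EuclideanSpace ℝ (Fin D)) w : ℝ) - t * g 0 : ℝ) : EReal)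
      ≤ tConj D t g w := le_iSup (fun z : orthant D =>
        (((inner ℝ z.1 w : ℝ) - t * g z.1 : ℝ) : EReal)) ⟨0, orthant_zero⟩
  rw [h, le_bot_iff] at hle
  exact EReal.coe_ne_bot _ hle

lemma tConj_one_mul (t : ℝ) (g : EuclideanSpace ℝ (Fin D) → ℝ) :
    tConj D 1 (fun z => t * g z) = tConj D t g := by
  funext w; unfold tConj; simp [one_mul]

lemma er_sub_top (a : EReal) (h : a ≠ ⊤) : a - ⊤ = ⊥ := by
  rw [sub_eq_add_neg, EReal.neg_top, EReal.add_bot]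

lemma er_iSup_sub {ι : Sort*} [Nonempty ι] (a : ι → EReal) (c : ℝ) :
    (⨆ i, a i) - (c : EReal) = ⨆ i, (a i - (c : EReal)) := by
  refine le_antisymm ?_ (iSup_le fun i => EReal.sub_le_sub (le_iSup a i) le_rfl)
  rw [EReal.sub_le_iff_le_add (Or.inl (EReal.coe_ne_bot c)) (Or.inl (EReal.coe_ne_top c))]
  refine iSup_le fun i => ?_
  calc a i = (a i - (c : EReal)) + (c : EReal) := EReal.sub_add_cancel.symm
    _ ≤ (⨆ j, (a j - (c : EReal))) + (c : EReal) :=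
        add_le_add (le_iSup (fun j => a j - (c : EReal)) i) le_rfl

lemma er_sub_neg (a : EReal) (c : ℝ) : a - ((-c : ℝ) : EReal) = a + (c : EReal) := by
  rw [sub_eq_add_neg, EReal.coe_neg, neg_neg]

lemma er_add_iSup {ι : Sort*} [Nonempty ι] (a : ι → EReal) (c : ℝ) :
    (c : EReal) + (⨆ i, a i) = ⨆ i, ((c : EReal) + a i) := by
  have h := er_iSup_sub a (-c)
  simp only [er_sub_neg] at h
  rw [add_comm]
  rw [h]
  exact iSup_congr fun i => add_comm _ _

lemma er_le_of_forall {b : ℝ} {a : EReal}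
    (h : ∀ ε : ℝ, 0 < ε → ((b - ε : ℝ) : EReal) ≤ a) : (b : EReal) ≤ a := by
  by_contra hab
  push_neg at hab
  induction a using EReal.rec with
  | bot =>
      have := h 1 one_pos
      rw [le_bot_iff] at this
      exact EReal.coe_ne_bot _ this
  | coe r =>
      have hrb : r < b := by exact_mod_cast hab
      have h2 := h ((b - r) / 2) (by linarith)
      rw [EReal.coe_le_coe_iff] at h2
      linarith
  | top => exact (not_top_lt hab)

/-- ε-subgradient in the orthant for convex, continuous, orthant-increasing functions. -/
lemma exists_eps_subgradient (f : EuclideanSpace ℝ (Fin D) → ℝ)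
    (hconv : ConvexOn ℝ (orthant D) f)
    (hcont : ContinuousOn f (orthant D))
    (hmono : ∀ a ∈ orthant D, ∀ b ∈ orthant D, f a ≤ f (a + b))
    {y : EuclideanSpace ℝ (Fin D)} (hy : y ∈ orthant D) {ε : ℝ} (hε : 0 < ε) :
    ∃ p ∈ orthant D, ∀ z ∈ orthant D, f y - ε + (inner ℝ p (z - y) : ℝ) ≤ f z := by
  classical
  set S : Set (EuclideanSpace ℝ (Fin D) × ℝ) := {q | q.1 ∈ orthant D ∧ f q.1 ≤ q.2} with hS
  have hSconv : Convex ℝ S := hconv.convex_epigraph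
  have hSclosed : IsClosed S := by
    have heq : S = ((orthant D) ×ˢ (Set.univ : Set ℝ)) ∩
        ((fun q : EuclideanSpace ℝ (Fin D) × ℝ => f q.1 - q.2) ⁻¹' Set.Iic 0) := by
      ext ⟨z, r⟩
      simp only [hS, Set.mem_setOf_eq, Set.mem_inter_iff, Set.mem_prod, Set.mem_univ,
        and_true, Set.mem_preimage, Set.mem_Iic, sub_nonpos]
    rw [heq]
    refine ContinuousOn.preimage_isClosed_of_isClosed ?_
      (orthant_closed.prod isClosed_univ) isClosed_Iic
    exact (hcont.comp continuous_fst.continuousOn Set.mapsTo_fst_prod).sub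
      continuous_snd.continuousOn
  have hnot : ((y, f y - ε) : EuclideanSpace ℝ (Fin D) × ℝ) ∉ S := by
    rintro ⟨-, h2⟩; simp only at h2; linarith
  obtain ⟨φ, u, hu1, hu2⟩ := geometric_hahn_banach_point_closed hSconv hSclosed hnot
  have hdecomp : ∀ (z : EuclideanSpace ℝ (Fin D)) (r : ℝ),
      φ (z, r) = φ (z, 0) + r * φ (0, 1) := by
    intro z r
    have h : ((z, r) : EuclideanSpace ℝ (Fin D) × ℝ)
        = (z, (0:ℝ)) + r • ((0 : EuclideanSpace ℝ (Fin D)), (1:ℝ)) := by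
      simp [Prod.ext_iff]
    rw [h, map_add, φ.map_smul, smul_eq_mul]
  set s := φ (0, 1) with hsdef
  have hyS : ((y, f y) : EuclideanSpace ℝ (Fin D) × ℝ) ∈ S := ⟨hy, le_refl _⟩
  have hs_nonneg : 0 ≤ s := by
    by_contra hs
    push_neg at hs
    set M : ℝ := max 0 ((u - φ (y, 0) - f y * s) / s) with hM
    have hM0 : (0:ℝ) ≤ M := le_max_left _ _
    have hMS : ((y, f y + M) : EuclideanSpace ℝ (Fin D) × ℝ) ∈ S := ⟨hy, show f y ≤ f y + M by linarith⟩
    have h2 := hu2 _ hMS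
    rw [hdecomp] at h2
    have hMle : (u - φ (y, 0) - f y * s) / s ≤ M := le_max_right _ _
    have : M * s ≤ ((u - φ (y, 0) - f y * s) / s) * s :=
      mul_le_mul_of_nonpos_right hMle hs.le
    rw [div_mul_cancel₀ _ (ne_of_lt hs)] at this
    nlinarith
  have hs_ne : s ≠ 0 := by
    intro h0
    have h1 := hu1
    have h2 := hu2 _ hyS
    rw [hdecomp] at h1 h2
    rw [h0] at h1 h2
    simp at h1 h2
    linarith
  have hs_pos : 0 < s := lt_of_le_of_ne hs_nonneg (Ne.symm hs_ne)
  set L : EuclideanSpace ℝ (Fin D) →L[ℝ] ℝ :=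
    φ.comp (ContinuousLinearMap.inl ℝ (EuclideanSpace ℝ (Fin D)) ℝ) with hL
  set p₀ : EuclideanSpace ℝ (Fin D) :=
    (InnerProductSpace.toDual ℝ (EuclideanSpace ℝ (Fin D))).symm ((-s⁻¹) • L) with hp₀def
  have hp₀ : ∀ z : EuclideanSpace ℝ (Fin D), (inner ℝ p₀ z : ℝ) = -s⁻¹ * φ (z, 0) := by
    intro z
    rw [hp₀def, InnerProductSpace.toDual_symm_apply]
    simp [hL]
  have hφrep : ∀ z : EuclideanSpace ℝ (Fin D), φ (z, 0) = -s * (inner ℝ p₀ z : ℝ) := by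
    intro z
    rw [hp₀ z]
    field_simp
  have key0 : ∀ z ∈ orthant D,
      f y - ε + ((inner ℝ p₀ z : ℝ) - (inner ℝ p₀ y : ℝ)) ≤ f z := by
    intro z hz
    have h2 := hu2 (z, f z) ⟨hz, le_refl _⟩
    rw [hdecomp, hφrep] at h2
    have h1 := hu1
    rw [hdecomp, hφrep] at h1
    have h3 : (f y - ε + ((inner ℝ p₀ z : ℝ) - (inner ℝ p₀ y : ℝ))) * s < f z * s := by
      nlinarith
    have := lt_of_mul_lt_mul_right h3 hs_pos.le
    linarith
  have happ : ∀ (a b : EuclideanSpace ℝ (Fin D)) (i : Fin D), (a - b) i = a i - b i :=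
    fun a b i => rfl
  -- positive part of p₀
  set p : EuclideanSpace ℝ (Fin D) :=
    (WithLp.equiv 2 (Fin D → ℝ)).symm (fun i => max (p₀ i) 0) with hpdef
  have hpap : ∀ i, p i = max (p₀ i) 0 := by
    intro i; rfl
  refine ⟨p, fun i => by rw [hpap i]; exact le_max_right _ _, ?_⟩
  intro z hz
  set z' : EuclideanSpace ℝ (Fin D) := (WithLp.equiv 2 (Fin D → ℝ)).symm
      (fun i => if p₀ i < 0 then min (z i) (y i) else z i) with hz'def
  have hz'ap : ∀ i, z' i = if p₀ i < 0 then min (z i) (y i) else z i := by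
    intro i; rfl
  have hz'O : z' ∈ orthant D := by
    intro i; rw [hz'ap i]
    split_ifs
    · exact le_min (hz i) (hy i)
    · exact hz i
  have hdiffO : z - z' ∈ orthant D := by
    intro i
    rw [happ z z' i, hz'ap i]
    split_ifs
    · have := min_le_left (z i) (y i); linarith
    · simp
  have hfz' : f z' ≤ f z := by
    have h := hmono z' hz'O (z - z') hdiffO
    have hzz : z' + (z - z') = z := by abel
    rwa [hzz] at h
  have hinner : (inner ℝ p (z - y) : ℝ) ≤ (inner ℝ p₀ z' : ℝ) - (inner ℝ p₀ y : ℝ) := by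
    have h1 : (inner ℝ p₀ z' : ℝ) - (inner ℝ p₀ y : ℝ) = (inner ℝ p₀ (z' - y) : ℝ) := by
      rw [inner_sub_right]
    rw [h1, inner_sum', inner_sum']
    apply Finset.sum_le_sum
    intro i _
    rw [happ z y i, happ z' y i, hpap i, hz'ap i]
    by_cases h : p₀ i < 0
    · simp only [h, if_true, max_eq_right h.le, zero_mul]
      have h2 : min (z i) (y i) - y i ≤ 0 := by
        have := min_le_right (z i) (y i); linarith
      nlinarith
    · rw [if_neg h, max_eq_left (not_lt.mp h)]
  have := key0 z' hz'O
  linarith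

/-- Fenchel–Moreau for the monotone conjugate on the orthant. -/
lemma monotone_biconj (f : EuclideanSpace ℝ (Fin D) → ℝ)
    (hconv : ConvexOn ℝ (orthant D) f)
    (hcont : ContinuousOn f (orthant D))
    (hmono : ∀ a ∈ orthant D, ∀ b ∈ orthant D, f a ≤ f (a + b))
    {y : EuclideanSpace ℝ (Fin D)} (hy : y ∈ orthant D) :
    (⨆ p : orthant D, (((inner ℝ p.1 y : ℝ) : EReal) - tConj D 1 f p.1)) = (f y : EReal) := by
  apply le_antisymm
  · refine iSup_le ?_
    rintro ⟨p, hp⟩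
    have h1 : (((inner ℝ y p : ℝ) - 1 * f y : ℝ) : EReal) ≤ tConj D 1 f p :=
      le_iSup (fun z : orthant D => (((inner ℝ z.1 p : ℝ) - 1 * f z.1 : ℝ) : EReal)) ⟨y, hy⟩
    rcases eq_or_ne (tConj D 1 f p) ⊤ with hT | hT
    · rw [hT, er_sub_top _ (EReal.coe_ne_top _)]
      exact bot_le
    · obtain ⟨c, hc⟩ : ∃ c : ℝ, tConj D 1 f p = (c : EReal) :=
        ⟨(tConj D 1 f p).toReal, (EReal.coe_toReal hT (tConj_ne_bot _ _ _)).symm⟩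
      rw [hc] at h1 ⊢
      rw [EReal.coe_le_coe_iff] at h1
      rw [← EReal.coe_sub, EReal.coe_le_coe_iff]
      have hcomm : (inner ℝ y p : ℝ) = (inner ℝ p y : ℝ) := real_inner_comm p y
      linarith
  · apply er_le_of_forall
    intro ε hε
    obtain ⟨p, hp, hsub⟩ := exists_eps_subgradient f hconv hcont hmono hy hε
    have hb : tConj D 1 f p ≤ (((inner ℝ p y : ℝ) - (f y - ε) : ℝ) : EReal) := by
      refine iSup_le ?_
      rintro ⟨z, hz⟩
      rw [EReal.coe_le_coe_iff]
      have h := hsub z hz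
      have h2 : (inner ℝ p (z - y) : ℝ) = (inner ℝ p z : ℝ) - (inner ℝ p y : ℝ) :=
        inner_sub_right _ _ _
      have h3 : (inner ℝ z p : ℝ) = (inner ℝ p z : ℝ) := real_inner_comm p z
      rw [h2] at h
      linarith
    have h4 : (((inner ℝ p y : ℝ) : EReal)) - (((inner ℝ p y : ℝ) - (f y - ε) : ℝ) : EReal)
        ≤ ((inner ℝ p y : ℝ) : EReal) - tConj D 1 f p :=
      EReal.sub_le_sub le_rfl hb
    have h5 : (((inner ℝ p y : ℝ) : EReal)) - (((inner ℝ p y : ℝ) - (f y - ε) : ℝ) : EReal)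
        = ((f y - ε : ℝ) : EReal) := by
      rw [← EReal.coe_sub]
      norm_cast
      ring
    rw [h5] at h4
    refine le_trans h4 ?_
    exact le_iSup (fun p : orthant D =>
      (((inner ℝ p.1 y : ℝ) : EReal) - tConj D 1 f p.1)) ⟨p, hp⟩

end Helpers

/-- for `ξ` continuous, convex and `ℝ_+^D`-increasing, `χ` Lipschitz, convex
and `ℝ_+^D`-increasing, and `t ≥ 0`, one has for every `x ∈ ℝ_+^D`:
`sup_{y ∈ ℝ_+^D} (χ(y) − (tξ)*(y−x)) = sup_{p ∈ ℝ_+^D} (p·x + tξ(p) − χ*(p))`. -/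
theorem hopfLax_eq_hopf (D : ℕ) (hD : 1 ≤ D)
    (ξ : EuclideanSpace ℝ (Fin D) → ℝ)
    (hξcont : ContinuousOn ξ (orthant D))
    (hξconv : ConvexOn ℝ (orthant D) ξ)
    (hξmono : ∀ x ∈ orthant D, ∀ y ∈ orthant D, ξ x ≤ ξ (x + y))
    (χ : EuclideanSpace ℝ (Fin D) → ℝ) (K : ℝ≥0)
    (hχlip : LipschitzOnWith K χ (orthant D))
    (hχconv : ConvexOn ℝ (orthant D) χ)
    (hχmono : ∀ x ∈ orthant D, ∀ y ∈ orthant D, χ x ≤ χ (x + y))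
    (t : ℝ) (ht : 0 ≤ t)
    (x : EuclideanSpace ℝ (Fin D)) (hx : x ∈ orthant D) :
    (⨆ y : orthant D, ((χ y.1 : EReal) - tConj D t ξ (y.1 - x))) =
      ⨆ p : orthant D, ((((inner ℝ p.1 x : ℝ) + t * ξ p.1 : ℝ) : EReal) - tConj D 1 χ p.1) := by
  classical
  set tξ : EuclideanSpace ℝ (Fin D) → ℝ := fun z => t * ξ z with htξ
  have htξconv : ConvexOn ℝ (orthant D) tξ := by
    have h := hξconv.smul ht
    have heq : (fun z : EuclideanSpace ℝ (Fin D) => t • ξ z) = tξ := by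
      funext z; simp [htξ, smul_eq_mul]
    rwa [heq] at h
  have htξcont : ContinuousOn tξ (orthant D) := continuousOn_const.mul hξcont
  have htξmono : ∀ a ∈ orthant D, ∀ b ∈ orthant D, tξ a ≤ tξ (a + b) := by
    intro a ha b hb
    exact mul_le_mul_of_nonneg_left (hξmono a ha b hb) ht
  have FMχ : ∀ y ∈ orthant D,
      (⨆ p : orthant D, (((inner ℝ p.1 y : ℝ) : EReal) - tConj D 1 χ p.1)) = (χ y : EReal) :=
    fun y hy => monotone_biconj χ hχconv hχlip.continuousOn hχmono hy
  have FMξ : ∀ p ∈ orthant D,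
      (⨆ w : orthant D, (((inner ℝ w.1 p : ℝ) : EReal) - tConj D t ξ w.1))
        = ((t * ξ p : ℝ) : EReal) := by
    intro p hp
    have := monotone_biconj tξ htξconv htξcont htξmono hp
    rw [tConj_one_mul t ξ] at this
    exact this
  apply le_antisymm
  · -- Hopf-Lax ≤ Hopf
    refine iSup_le ?_
    rintro ⟨y, hy⟩
    rcases eq_or_ne (tConj D t ξ (y - x)) ⊤ with hT | hT
    · rw [hT, er_sub_top _ (EReal.coe_ne_top _)]
      exact bot_le
    obtain ⟨c, hc⟩ : ∃ c : ℝ, tConj D t ξ (y - x) = (c : EReal) :=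
      ⟨(tConj D t ξ (y - x)).toReal, (EReal.coe_toReal hT (tConj_ne_bot _ _ _)).symm⟩
    rw [hc, ← FMχ y hy, er_iSup_sub]
    refine iSup_le ?_
    rintro ⟨p, hp⟩
    refine le_trans ?_ (le_iSup (fun p : orthant D =>
      ((((inner ℝ p.1 x : ℝ) + t * ξ p.1 : ℝ) : EReal) - tConj D 1 χ p.1)) ⟨p, hp⟩)
    rcases eq_or_ne (tConj D 1 χ p) ⊤ with hCT | hCT
    · rw [hCT, er_sub_top _ (EReal.coe_ne_top _), er_sub_top _ (EReal.coe_ne_top _)]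
      rw [show (⊥ : EReal) - (c : EReal) = ⊥ from by
        rw [sub_eq_add_neg, ← EReal.coe_neg, EReal.bot_add]]
    obtain ⟨c', hc'⟩ : ∃ c' : ℝ, tConj D 1 χ p = (c' : EReal) :=
      ⟨(tConj D 1 χ p).toReal, (EReal.coe_toReal hCT (tConj_ne_bot _ _ _)).symm⟩
    rw [hc']
    have hkey : ((inner ℝ p (y - x) : ℝ) - t * ξ p : ℝ) ≤ c := by
      have h0 : (((inner ℝ p (y - x) : ℝ) - t * ξ p : ℝ) : EReal) ≤ tConj D t ξ (y - x) :=
        le_iSup (fun z : orthant D =>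
          (((inner ℝ z.1 (y - x) : ℝ) - t * ξ z.1 : ℝ) : EReal)) ⟨p, hp⟩
      rw [hc] at h0
      exact_mod_cast h0
    have hinner : (inner ℝ p (y - x) : ℝ) = (inner ℝ p y : ℝ) - (inner ℝ p x : ℝ) :=
      inner_sub_right _ _ _
    rw [← EReal.coe_sub, ← EReal.coe_sub, ← EReal.coe_sub, EReal.coe_le_coe_iff]
    linarith
  · -- Hopf ≤ Hopf-Lax
    refine iSup_le ?_
    rintro ⟨p, hp⟩
    rcases eq_or_ne (tConj D 1 χ p) ⊤ with hCT | hCT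
    · rw [hCT, er_sub_top _ (EReal.coe_ne_top _)]
      exact bot_le
    obtain ⟨c', hc'⟩ : ∃ c' : ℝ, tConj D 1 χ p = (c' : EReal) :=
      ⟨(tConj D 1 χ p).toReal, (EReal.coe_toReal hCT (tConj_ne_bot _ _ _)).symm⟩
    rw [hc']
    rw [show ((((inner ℝ p x : ℝ) + t * ξ p : ℝ)) : EReal)
        = ((inner ℝ p x : ℝ) : EReal) + ((t * ξ p : ℝ) : EReal) from by
      rw [← EReal.coe_add]]
    rw [← FMξ p hp, er_add_iSup, er_iSup_sub]
    refine iSup_le ?_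
    rintro ⟨w, hw⟩
    rcases eq_or_ne (tConj D t ξ w) ⊤ with hGT | hGT
    · rw [hGT, er_sub_top _ (EReal.coe_ne_top _), EReal.add_bot]
      rw [show (⊥ : EReal) - (c' : EReal) = ⊥ from by
        rw [sub_eq_add_neg, ← EReal.coe_neg, EReal.bot_add]]
      exact bot_le
    obtain ⟨g, hg⟩ : ∃ g : ℝ, tConj D t ξ w = (g : EReal) :=
      ⟨(tConj D t ξ w).toReal, (EReal.coe_toReal hGT (tConj_ne_bot _ _ _)).symm⟩
    rw [hg]
    have hwx : w + x ∈ orthant D := orthant_add hw hx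
    refine le_trans ?_ (le_iSup (fun y : orthant D =>
      ((χ y.1 : EReal) - tConj D t ξ (y.1 - x))) ⟨w + x, hwx⟩)
    have hsimp : (w + x) - x = w := by abel
    rw [hsimp, hg]
    have hkey : ((inner ℝ (w + x) p : ℝ) - 1 * χ (w + x) : ℝ) ≤ c' := by
      have h0 : (((inner ℝ (w + x) p : ℝ) - 1 * χ (w + x) : ℝ) : EReal) ≤ tConj D 1 χ p :=
        le_iSup (fun z : orthant D =>
          (((inner ℝ z.1 p : ℝ) - 1 * χ z.1 : ℝ) : EReal)) ⟨w + x, hwx⟩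
      rw [hc'] at h0
      exact_mod_cast h0
    have hinner : (inner ℝ (w + x) p : ℝ) = (inner ℝ w p : ℝ) + (inner ℝ x p : ℝ) :=
      inner_add_left _ _ _
    have hcomm : (inner ℝ x p : ℝ) = (inner ℝ p x : ℝ) := real_inner_comm p x
    rw [← EReal.coe_sub, ← EReal.coe_add, ← EReal.coe_sub, ← EReal.coe_sub,
      EReal.coe_le_coe_iff]
    linarith
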